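/- Advanced composition (Dwork–Rothblum–Vadhan): in the adaptive composition model, suppose ε_i(w) = ε ≥ 0 and δ_i(w) = δ ∈ [0,1) for all i and all prefixes w. Then for every δ̂ > 0, the view distributions V^0 and V^1, as PMFs on Ω^k, are (ε_g, δ_g)-indistinguishable with ε_g = ε(e^ε − 1)·k + ε·√(2k·log(1/δ̂)) and δ_g = k·δ + δ̂. -/

import Mathlib

open scoped ENNReal

namespace AdaptiveComp

variable {Ω : Type*}

/-- The prefix `v_{<i} = (v_1, …, v_{i-1})` of a tuple `v : Fin k → Ω`. -/
def pre {k : ℕ} (v : Fin k → Ω) (i : Fin k) : Fin i → Ω :=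
  fun j => v ⟨j.1, j.2.trans i.2⟩

/-- The view distribution `V^b` of the adaptive composition game: the PMF on `Ω^k`
obtained by sampling `v_i ∼ κ i (v_1, …, v_{i-1})` sequentially for `i = 1, …, k`. -/
noncomputable def view : (k : ℕ) → ((i : Fin k) → (Fin i → Ω) → PMF Ω) → PMF (Fin k → Ω)
  | 0, _ => PMF.pure finZeroElim
  | (k + 1), κ =>
      (view k (fun i w => κ i.castSucc w)).bind
        (fun w => (κ (Fin.last k) w).map (fun a => Fin.snoc w a))

/-- The privacy loss `Loss(v) = Σ_i log (κ⁰_i(v_{<i})({v_i}) / κ¹_i(v_{<i})({v_i}))`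
of a realized view, as an extended real (each ratio is computed in `ℝ≥0∞`). -/
noncomputable def loss {k : ℕ} (κ0 κ1 : (i : Fin k) → (Fin i → Ω) → PMF Ω)
    (v : Fin k → Ω) : EReal :=
  ∑ i : Fin k, ENNReal.log (κ0 i (pre v i) (v i) / κ1 i (pre v i) (v i))

/-- Two PMFs are `(ε,δ)`-indistinguishable if each assigns to every set at most
`e^ε` times the mass the other assigns, plus `δ`. -/
def Indist {Y : Type*} (p q : PMF Y) (ε δ : ℝ) : Prop :=
  ∀ S : Set Y,
    p.toOuterMeasure S ≤ ENNReal.ofReal (Real.exp ε) * q.toOuterMeasure S + ENNReal.ofReal δ ∧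
    q.toOuterMeasure S ≤ ENNReal.ofReal (Real.exp ε) * p.toOuterMeasure S + ENNReal.ofReal δ

open Classical Real

lemma snoc_lt {k : ℕ} (w : Fin k → Ω) (a : Ω) (m : Fin (k+1)) (h : m.1 < k) :
    Fin.snoc (α := fun _ => Ω) w a m = w ⟨m.1, h⟩ := by
  simp only [Fin.snoc, h, dif_pos]
  rfl

lemma pre_snoc_castSucc {k : ℕ} (w : Fin k → Ω) (a : Ω) (i : Fin k) :
    pre (Fin.snoc w a) i.castSucc = pre w i := by
  funext j
  exact snoc_lt w a _ (j.2.trans i.2)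

lemma pre_snoc_last {k : ℕ} (w : Fin k → Ω) (a : Ω) :
    pre (Fin.snoc w a) (Fin.last k) = w := by
  funext j
  exact snoc_lt w a _ j.2

lemma snoc_pre_last {k : ℕ} (v : Fin (k+1) → Ω) :
    Fin.snoc (pre v (Fin.last k)) (v (Fin.last k)) = v := by
  funext i
  refine Fin.lastCases ?_ (fun j => ?_) i
  · simp
  · rw [Fin.snoc_castSucc]; rfl

lemma view_apply {k : ℕ} (κ : (i : Fin k) → (Fin i → Ω) → PMF Ω) (v : Fin k → Ω) :
    view k κ v = ∏ i, κ i (pre v i) (v i) := by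
  induction k with
  | zero =>
      simp only [view, Finset.univ_eq_empty, Finset.prod_empty]
      rw [show v = finZeroElim from funext fun i => i.elim0]
      simp [PMF.pure_apply]
  | succ k ih =>
      show ((view k _).bind _) v = _
      rw [PMF.bind_apply]
      have hmap : ∀ w : Fin k → Ω,
          ((κ (Fin.last k) w).map (fun a => Fin.snoc w a)) v
            = if w = (pre v (Fin.last k) : Fin k → Ω) then
                κ (Fin.last k) w (v (Fin.last k)) else 0 := by
        intro w
        rw [PMF.map_apply]
        by_cases hw : w = (pre v (Fin.last k) : Fin k → Ω)
        · subst hw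
          rw [if_pos rfl]
          rw [tsum_eq_single (v (Fin.last k))]
          · rw [if_pos (snoc_pre_last v).symm]
          · intro b hb
            rw [if_neg]
            intro hvb
            apply hb
            have := congrFun hvb (Fin.last k)
            simpa [Fin.snoc_last] using this.symm
        · rw [if_neg hw]
          apply ENNReal.tsum_eq_zero.2
          intro b
          rw [if_neg]
          intro hvb
          apply hw
          funext j
          have := congrFun hvb (j.castSucc)
          rw [Fin.snoc_castSucc] at this
          rw [← this]
          rfl
      calc (∑' w : Fin k → Ω, view k (fun i w => κ i.castSucc w) w *
              ((κ (Fin.last k) w).map (fun a => Fin.snoc w a)) v)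
          = view k (fun i w => κ i.castSucc w) (pre v (Fin.last k)) *
              κ (Fin.last k) (pre v (Fin.last k)) (v (Fin.last k)) := by
            refine (tsum_eq_single (L := .unconditional _) (pre v (Fin.last k) : Fin k → Ω) ?_).trans ?_
            · intro w hw
              rw [hmap, if_neg hw, mul_zero]
            · rw [hmap, if_pos rfl]
        _ = ∏ i, κ i (pre v i) (v i) := by
            rw [ih, Fin.prod_univ_castSucc]
            rfl

/-- Composed weight of a family of sub-stochastic kernels. -/
noncomputable def W {k : ℕ} (κ : (i : Fin k) → (Fin i → Ω) → Ω → ℝ≥0∞)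
    (v : Fin k → Ω) : ℝ≥0∞ := ∏ i, κ i (pre v i) (v i)

lemma W_zero (κ : (i : Fin 0) → (Fin i → Ω) → Ω → ℝ≥0∞) (v : Fin 0 → Ω) :
    W κ v = 1 := by simp [W]

lemma W_snoc {k : ℕ} (κ : (i : Fin (k+1)) → (Fin i → Ω) → Ω → ℝ≥0∞)
    (w : Fin k → Ω) (a : Ω) :
    W κ (Fin.snoc w a) = W (fun i w => κ i.castSucc w) w * κ (Fin.last k) w a := by
  rw [W, Fin.prod_univ_castSucc]
  congr 1
  · apply Finset.prod_congr rfl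
    intro i _
    rw [Fin.snoc_castSucc]
    congr 1
    exact pre_snoc_castSucc w a i
  · rw [Fin.snoc_last]
    congr 1
    exact pre_snoc_last w a

/-- The snoc equivalence. -/
def snocEquiv (k : ℕ) : (Fin k → Ω) × Ω ≃ (Fin (k+1) → Ω) where
  toFun p := Fin.snoc p.1 p.2
  invFun v := (pre v (Fin.last k), v (Fin.last k))
  left_inv := fun ⟨w, a⟩ => by
    show (pre (Fin.snoc w a) (Fin.last k), Fin.snoc (α := fun _ => Ω) w a (Fin.last k)) = (w, a)
    rw [pre_snoc_last, Fin.snoc_last]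
  right_inv v := snoc_pre_last v

lemma tsum_succ {k : ℕ} (f : (Fin (k+1) → Ω) → ℝ≥0∞) :
    ∑' v, f v = ∑' (w : Fin k → Ω), ∑' a : Ω, f (Fin.snoc w a) := by
  rw [← Equiv.tsum_eq (snocEquiv k) f, ← ENNReal.tsum_prod]
  rfl

lemma tsum_W_le {k : ℕ} (κ : (i : Fin k) → (Fin i → Ω) → Ω → ℝ≥0∞) (B : ℝ≥0∞)
    (hκ : ∀ i w, ∑' a, κ i w a ≤ B) :
    ∑' v, W κ v ≤ B ^ k := by
  induction k with
  | zero =>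
      simp only [W_zero, pow_zero]
      rw [tsum_eq_single (finZeroElim : Fin 0 → Ω)
        (fun v hv => absurd (funext fun i => i.elim0) hv)]
  | succ k ih =>
      rw [tsum_succ]
      calc ∑' (w : Fin k → Ω), ∑' a : Ω, W κ (Fin.snoc w a)
          = ∑' (w : Fin k → Ω), W (fun i w => κ i.castSucc w) w * ∑' a : Ω, κ (Fin.last k) w a := by
            congr 1; funext w
            rw [← ENNReal.tsum_mul_left]
            congr 1; funext a
            exact W_snoc κ w a
        _ ≤ ∑' (w : Fin k → Ω), W (fun i w => κ i.castSucc w) w * B := by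
            apply ENNReal.tsum_le_tsum
            intro w
            exact mul_le_mul_right (hκ _ _) _
        _ ≤ B ^ k * B := by
            rw [ENNReal.tsum_mul_right]
            exact mul_le_mul_left (ih _ fun i w => hκ i.castSucc w) _
        _ = B ^ (k+1) := by ring

lemma mul_sub_mul_le {a b c d : ℝ≥0∞} : a * b - c * d ≤ (a - c) * b + c * (b - d) := by
  rw [tsub_le_iff_right]
  calc a * b ≤ ((a - c) + c) * b := by
        exact mul_le_mul_left le_tsub_add _
    _ = (a - c) * b + c * b := by ring
    _ ≤ (a - c) * b + c * ((b - d) + d) := by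
        exact add_le_add_right (mul_le_mul_right le_tsub_add _) _
    _ = (a - c) * b + (c * (b - d) + c * d) := by ring
  rw [← add_assoc]

lemma tsum_W_sub_le {k : ℕ} (κ κ' : (i : Fin k) → (Fin i → Ω) → Ω → ℝ≥0∞) (η : ℝ≥0∞)
    (hκ : ∀ i w, ∑' a, κ i w a ≤ 1) (hκ' : ∀ i w, ∑' a, κ' i w a ≤ 1)
    (hclose : ∀ i w, ∑' a, (κ i w a - κ' i w a) ≤ η) :
    ∑' v, (W κ v - W κ' v) ≤ k * η := by
  induction k with
  | zero => simp [W_zero]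
  | succ k ih =>
      rw [tsum_succ]
      have step : ∀ (w : Fin k → Ω) (a : Ω),
          W κ (Fin.snoc w a) - W κ' (Fin.snoc w a)
            ≤ (W (fun i w => κ i.castSucc w) w - W (fun i w => κ' i.castSucc w) w) *
                κ (Fin.last k) w a
              + W (fun i w => κ' i.castSucc w) w *
                (κ (Fin.last k) w a - κ' (Fin.last k) w a) := by
        intro w a
        rw [W_snoc, W_snoc]
        exact mul_sub_mul_le
      calc ∑' (w : Fin k → Ω), ∑' a : Ω, (W κ (Fin.snoc w a) - W κ' (Fin.snoc w a))
          ≤ ∑' (w : Fin k → Ω), ((W (fun i w => κ i.castSucc w) w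
                - W (fun i w => κ' i.castSucc w) w) * (∑' a, κ (Fin.last k) w a)
              + W (fun i w => κ' i.castSucc w) w *
                (∑' a, (κ (Fin.last k) w a - κ' (Fin.last k) w a))) := by
            apply ENNReal.tsum_le_tsum
            intro w
            rw [← ENNReal.tsum_mul_left, ← ENNReal.tsum_mul_left, ← ENNReal.tsum_add]
            exact ENNReal.tsum_le_tsum (step w)
        _ ≤ ∑' (w : Fin k → Ω), ((W (fun i w => κ i.castSucc w) w
                - W (fun i w => κ' i.castSucc w) w) * 1
              + W (fun i w => κ' i.castSucc w) w * η) := by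
            apply ENNReal.tsum_le_tsum
            intro w
            exact add_le_add (mul_le_mul_right (hκ _ _) _) (mul_le_mul_right (hclose _ _) _)
        _ ≤ k * η * 1 + 1 * η := by
            rw [ENNReal.tsum_add, ENNReal.tsum_mul_right, ENNReal.tsum_mul_right]
            refine add_le_add (mul_le_mul_left ?_ _) (mul_le_mul_left ?_ _)
            · exact ih _ _ (fun i w => hκ i.castSucc w) (fun i w => hκ' i.castSucc w)
                (fun i w => hclose i.castSucc w)
            · simpa using tsum_W_le _ 1 (fun i w => hκ' i.castSucc w)
        _ = (k+1 : ℕ) * η := by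
            push_cast
            ring

lemma W_mono {k : ℕ} {κ κ' : (i : Fin k) → (Fin i → Ω) → Ω → ℝ≥0∞}
    (h : ∀ i w a, κ i w a ≤ κ' i w a) (v : Fin k → Ω) : W κ v ≤ W κ' v :=
  Finset.prod_le_prod' fun i _ => h i _ _



/-- Core of Hoeffding's lemma: `(1-p) + p e^h ≤ exp (p h + h²/8)` for `p ∈ [0,1]`, `h ≥ 0`. -/
lemma hoeffding_core {p : ℝ} (hp0 : 0 ≤ p) (hp1 : p ≤ 1) {h : ℝ} (hh : 0 ≤ h) :
    (1 - p) + p * exp h ≤ exp (p * h + h ^ 2 / 8) := by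
  set u : ℝ → ℝ := fun x => 1 - p + p * exp x with hu_def
  have hu_pos : ∀ x, 0 < u x := by
    intro x
    rcases eq_or_lt_of_le hp0 with hp | hp
    · simp [hu_def, ← hp]
    · have : 0 < p * exp x := mul_pos hp (exp_pos x)
      have : (0:ℝ) ≤ 1 - p := by linarith
      simp only [hu_def]
      nlinarith [exp_pos x]
  have hu : ∀ x, HasDerivAt u (p * exp x) x := by
    intro x
    simpa [hu_def] using ((Real.hasDerivAt_exp x).const_mul p).const_add (1 - p)
  -- f x = log (u x) - p x ; g x = x/4 - f' x ; F x = x²/8 - f x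
  set f : ℝ → ℝ := fun x => Real.log (u x) - p * x with hf_def
  have hf : ∀ x, HasDerivAt f (p * exp x / u x - p) x := by
    intro x
    have hlin : HasDerivAt (fun y : ℝ => p * y) p x := by
      simpa using (hasDerivAt_id x).const_mul p
    exact ((hu x).log (hu_pos x).ne').sub hlin
  set g : ℝ → ℝ := fun x => x / 4 - (p * exp x / u x - p) with hg_def
  have hg : ∀ x, HasDerivAt g
      (1 / 4 - ((p * exp x * u x - p * exp x * (p * exp x)) / (u x) ^ 2 - 0)) x := by
    intro x
    have hnum : HasDerivAt (fun y : ℝ => p * exp y) (p * exp x) x :=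
      (Real.hasDerivAt_exp x).const_mul p
    have hq : HasDerivAt (fun y : ℝ => p * exp y / u y)
        ((p * exp x * u x - p * exp x * (p * exp x)) / (u x) ^ 2) x :=
      hnum.div (hu x) (hu_pos x).ne'
    have hx4 : HasDerivAt (fun y : ℝ => y / 4) (1 / 4 : ℝ) x := by
      simpa using (hasDerivAt_id x).div_const 4
    exact hx4.sub (hq.sub (hasDerivAt_const x p))
  have hg_deriv_nonneg : ∀ x, 0 ≤ 1 / 4 - ((p * exp x * u x - p * exp x * (p * exp x)) / (u x) ^ 2 - 0) := by
    intro x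
    have h1 : p * exp x * u x - p * exp x * (p * exp x) = (p * exp x) * (1 - p) := by
      simp only [hu_def]; ring
    rw [h1, sub_zero, sub_nonneg, div_le_iff₀ (pow_pos (hu_pos x) 2)]
    have hx : u x = (1 - p) + p * exp x := rfl
    nlinarith [sq_nonneg ((1 - p) - p * exp x), exp_pos x, hp0, hp1]
  have hg_mono : Monotone g := by
    apply monotone_of_deriv_nonneg
    · intro x; exact (hg x).differentiableAt
    · intro x
      rw [(hg x).deriv]
      exact hg_deriv_nonneg x
  have hg0 : g 0 = 0 := by
    simp only [hg_def, hu_def]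
    norm_num
  have hg_nonneg : ∀ x, 0 ≤ x → 0 ≤ g x := fun x hx => hg0 ▸ hg_mono hx
  set F : ℝ → ℝ := fun x => x ^ 2 / 8 - f x with hF_def
  have hF : ∀ x, HasDerivAt F (x / 4 - (p * exp x / u x - p)) x := by
    intro x
    have h2 : HasDerivAt (fun x : ℝ => x ^ 2 / 8) (x / 4) x := by
      have := ((hasDerivAt_pow 2 x).div_const 8)
      simpa using this.congr_deriv (by ring)
    exact h2.sub (hf x)
  have hF_mono : MonotoneOn F (Set.Ici 0) := by
    apply monotoneOn_of_deriv_nonneg (convex_Ici 0)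
    · exact fun x _ => ((hF x).differentiableAt.continuousAt).continuousWithinAt
    · exact fun x _ => (hF x).differentiableAt.differentiableWithinAt
    · intro x hx
      rw [(hF x).deriv]
      exact hg_nonneg x (le_of_lt (by simpa using hx))
  have hF0 : F 0 = 0 := by
    simp only [hF_def, hf_def, hu_def]
    norm_num
  have hFh : 0 ≤ F h := hF0 ▸ hF_mono (Set.self_mem_Ici) (Set.mem_Ici.2 hh) hh
  -- conclude
  have hfh : f h ≤ h ^ 2 / 8 := by
    simp only [hF_def] at hFh; linarith
  have : Real.log (u h) ≤ p * h + h ^ 2 / 8 := by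
    simp only [hf_def] at hfh; linarith
  calc (1 - p) + p * exp h = u h := rfl
    _ = exp (Real.log (u h)) := (exp_log (hu_pos h)).symm
    _ ≤ exp (p * h + h ^ 2 / 8) := exp_le_exp.2 this

/-- Chord bound: for `m ∈ [-ε, ε]`, `l ≥ 0`:
`((ε-m) e^{-lε} + (m+ε) e^{lε}) / (2ε) ≤ exp (l m + l² ε² / 2)`. -/
lemma chord_bound {ε l m : ℝ} (hε : 0 < ε) (hl : 0 ≤ l) (hm1 : -ε ≤ m) (hm2 : m ≤ ε) :
    ((ε - m) * exp (-(l * ε)) + (m + ε) * exp (l * ε)) / (2 * ε)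
      ≤ exp (l * m + l ^ 2 * ε ^ 2 / 2) := by
  have h2ε : (0:ℝ) < 2 * ε := by linarith
  set p : ℝ := (m + ε) / (2 * ε) with hp_def
  have hp0 : 0 ≤ p := div_nonneg (by linarith) (le_of_lt h2ε)
  have hp1 : p ≤ 1 := by
    rw [hp_def, div_le_one h2ε]; linarith
  have key := hoeffding_core hp0 hp1 (h := 2 * l * ε) (by positivity)
  have h1p : 1 - p = (ε - m) / (2 * ε) := by
    rw [hp_def]; field_simp; ring
  have hexp : exp (2 * l * ε) = exp (l * ε) * exp (l * ε) := by
    rw [← exp_add]; ring_nf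
  have lhs_eq : ((ε - m) * exp (-(l * ε)) + (m + ε) * exp (l * ε)) / (2 * ε)
      = exp (-(l * ε)) * ((1 - p) + p * exp (2 * l * ε)) := by
    rw [h1p, hp_def, hexp]
    rw [exp_neg]
    field_simp
  rw [lhs_eq]
  calc exp (-(l * ε)) * ((1 - p) + p * exp (2 * l * ε))
      ≤ exp (-(l * ε)) * exp (p * (2 * l * ε) + (2 * l * ε) ^ 2 / 8) := by
        apply mul_le_mul_of_nonneg_left key (le_of_lt (exp_pos _))
    _ = exp (-(l * ε) + (p * (2 * l * ε) + (2 * l * ε) ^ 2 / 8)) := by rw [← exp_add]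
    _ = exp (l * m + l ^ 2 * ε ^ 2 / 2) := by
        congr 1
        rw [hp_def]
        field_simp
        ring

/-- Convexity chord bound for exp: `-ε ≤ x ≤ ε` implies
`exp (l x) ≤ ((ε-x) e^{-lε} + (x+ε) e^{lε}) / (2ε)`. -/
lemma exp_chord {ε l x : ℝ} (hε : 0 < ε) (hx1 : -ε ≤ x) (hx2 : x ≤ ε) :
    exp (l * x) ≤ ((ε - x) * exp (-(l * ε)) + (x + ε) * exp (l * ε)) / (2 * ε) := by
  have h2ε : (0:ℝ) < 2 * ε := by linarith
  have ha : (0:ℝ) ≤ (ε - x) / (2 * ε) := div_nonneg (by linarith) h2ε.le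
  have hb : (0:ℝ) ≤ (x + ε) / (2 * ε) := div_nonneg (by linarith) h2ε.le
  have hab : (ε - x) / (2 * ε) + (x + ε) / (2 * ε) = 1 := by field_simp; ring
  have := convexOn_exp.2 (Set.mem_univ (-(l * ε))) (Set.mem_univ (l * ε)) ha hb hab
  have harg : ((ε - x) / (2 * ε)) • (-(l * ε)) + ((x + ε) / (2 * ε)) • (l * ε) = l * x := by
    simp only [smul_eq_mul]
    field_simp
    ring
  rw [harg] at this
  calc exp (l * x) ≤ ((ε - x) / (2 * ε)) * exp (-(l * ε)) + ((x + ε) / (2 * ε)) * exp (l * ε) := by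
        simpa [smul_eq_mul] using this
    _ = ((ε - x) * exp (-(l * ε)) + (x + ε) * exp (l * ε)) / (2 * ε) := by ring


lemma step_real {ε l : ℝ} (hε : 0 < ε) (hl : 0 ≤ l) {Ω : Type*}
    (P Q : Ω → ℝ) (hP0 : ∀ a, 0 ≤ P a) (hQ0 : ∀ a, 0 ≤ Q a)
    (hPs : Summable P) (hQs : Summable Q)
    (hPQ : ∀ a, P a ≤ exp ε * Q a) (hQP : ∀ a, Q a ≤ exp ε * P a)
    (hmass : ∑' a, P a = ∑' a, Q a) (hM1 : ∑' a, P a ≤ 1) :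
    ∑' a, P a * (P a / Q a) ^ l ≤ exp (l * (ε * (exp ε - 1)) + l ^ 2 * ε ^ 2 / 2) := by
  set T : Ω → ℝ := fun a => P a * (P a / Q a) ^ l with hT_def
  set X : Ω → ℝ := fun a => Real.log (P a / Q a) with hX_def
  have hee1 : (0:ℝ) ≤ exp ε - 1 := by
    have : (1:ℝ) ≤ exp ε := by
      rw [← Real.exp_zero]; exact exp_le_exp.2 hε.le
    linarith
  -- support facts
  have hQ_zero : ∀ a, Q a = 0 → P a = 0 := fun a h =>
    le_antisymm (by simpa [h] using hPQ a) (hP0 a)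
  have hP_zero : ∀ a, P a = 0 → Q a = 0 := fun a h =>
    le_antisymm (by simpa [h] using hQP a) (hQ0 a)
  have hT0 : ∀ a, P a = 0 → T a = 0 := by
    intro a h; simp [hT_def, h]
  -- ratio bounds on the support
  have hratio : ∀ a, 0 < P a → exp (-ε) ≤ P a / Q a ∧ P a / Q a ≤ exp ε := by
    intro a ha
    have hQpos : 0 < Q a := by
      rcases (hQ0 a).lt_or_eq with h | h
      · exact h
      · exact absurd (hQ_zero a h.symm) (by linarith)
    constructor
    · rw [le_div_iff₀ hQpos, exp_neg, inv_mul_le_iff₀ (exp_pos ε)]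
      exact hQP a
    · rw [div_le_iff₀ hQpos]
      exact hPQ a
  have hXbound : ∀ a, 0 < P a → -ε ≤ X a ∧ X a ≤ ε := by
    intro a ha
    obtain ⟨h1, h2⟩ := hratio a ha
    have hrpos : 0 < P a / Q a := lt_of_lt_of_le (exp_pos _) h1
    constructor
    · have h := Real.log_le_log (exp_pos (-ε)) h1
      rwa [Real.log_exp] at h
    · have h := Real.log_le_log hrpos h2
      rwa [Real.log_exp] at h
  -- T bound and summability
  have hT_nonneg : ∀ a, 0 ≤ T a := fun a =>
    mul_nonneg (hP0 a) (Real.rpow_nonneg (div_nonneg (hP0 a) (hQ0 a)) l)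
  have hT_le : ∀ a, T a ≤ exp (ε * l) * P a := by
    intro a
    rcases (hP0 a).lt_or_eq with ha | ha
    · have h2 := (hratio a ha).2
      have : (P a / Q a) ^ l ≤ (exp ε) ^ l :=
        Real.rpow_le_rpow (div_nonneg (hP0 a) (hQ0 a)) h2 hl
      have hexpl : (exp ε) ^ l = exp (ε * l) := by
        rw [← Real.exp_log (exp_pos ε), ← Real.exp_mul, Real.log_exp]
      calc T a ≤ P a * (exp ε) ^ l := by
            exact mul_le_mul_of_nonneg_left this (hP0 a)
        _ = exp (ε * l) * P a := by rw [hexpl]; ring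
    · rw [hT0 a ha.symm]
      positivity
  have hTs : Summable T :=
    Summable.of_nonneg_of_le hT_nonneg hT_le (hPs.mul_left _)
  -- Y = P * X summability
  have hY_abs : ∀ a, |P a * X a| ≤ ε * P a := by
    intro a
    rcases (hP0 a).lt_or_eq with ha | ha
    · obtain ⟨h1, h2⟩ := hXbound a ha
      rw [abs_mul, abs_of_pos ha]
      calc P a * |X a| ≤ P a * ε := by
            apply mul_le_mul_of_nonneg_left _ (hP0 a)
            exact abs_le.2 ⟨h1, h2⟩
        _ = ε * P a := by ring
    · simp [← ha]
  have hYs : Summable (fun a => P a * X a) := by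
    apply Summable.of_abs
    exact Summable.of_nonneg_of_le (fun a => abs_nonneg _) hY_abs (hPs.mul_left _)
  set M : ℝ := ∑' a, P a with hM_def
  set K : ℝ := ∑' a, P a * X a with hK_def
  have hM0 : 0 ≤ M := tsum_nonneg hP0
  -- chord coefficients
  set A : ℝ := (ε * exp (-(l * ε)) + ε * exp (l * ε)) / (2 * ε) with hA_def
  set B : ℝ := (exp (l * ε) - exp (-(l * ε))) / (2 * ε) with hB_def
  have hB0 : 0 ≤ B := by
    apply div_nonneg _ (by linarith)
    have : exp (-(l * ε)) ≤ exp (l * ε) := by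
      apply exp_le_exp.2
      nlinarith
    linarith
  have hpoint : ∀ a, T a ≤ A * P a + B * (P a * X a) := by
    intro a
    rcases (hP0 a).lt_or_eq with ha | ha
    · have hQpos : 0 < Q a := by
        rcases (hQ0 a).lt_or_eq with h | h
        · exact h
        · exact absurd (hQ_zero a h.symm) (by linarith)
      have hr : 0 < P a / Q a := div_pos ha hQpos
      have hT_eq : T a = P a * exp (l * X a) := by
        show P a * (P a / Q a) ^ l = P a * exp (l * Real.log (P a / Q a))
        rw [Real.rpow_def_of_pos hr, mul_comm l]
      obtain ⟨h1, h2⟩ := hXbound a ha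
      have hc := exp_chord (l := l) hε h1 h2
      calc T a = P a * exp (l * X a) := hT_eq
        _ ≤ P a * (((ε - X a) * exp (-(l * ε)) + (X a + ε) * exp (l * ε)) / (2 * ε)) :=
            mul_le_mul_of_nonneg_left hc (hP0 a)
        _ = A * P a + B * (P a * X a) := by
            rw [hA_def, hB_def]
            field_simp
            ring
    · rw [hT0 a ha.symm, ← ha]
      simp
  have hsum1 : ∑' a, T a ≤ A * M + B * K := by
    calc ∑' a, T a ≤ ∑' a, (A * P a + B * (P a * X a)) :=
          Summable.tsum_le_tsum hpoint hTs ((hPs.mul_left A).add (hYs.mul_left B))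
      _ = A * M + B * K := by
          rw [Summable.tsum_add (hPs.mul_left A) (hYs.mul_left B), tsum_mul_left, tsum_mul_left]
  -- bounds on K
  have hYabs_s : Summable (fun a => |P a * X a|) :=
    Summable.of_nonneg_of_le (fun a => abs_nonneg _) hY_abs (hPs.mul_left _)
  have hK_abs : |K| ≤ ε * M := by
    calc |K| ≤ ∑' a, |P a * X a| := by
          have := norm_tsum_le_tsum_norm (f := fun a => P a * X a)
            (by simpa [Real.norm_eq_abs, abs_mul] using hYabs_s)
          simpa [Real.norm_eq_abs, abs_mul] using this
      _ ≤ ∑' a, ε * P a := Summable.tsum_le_tsum hY_abs hYabs_s (hPs.mul_left ε)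
      _ = ε * M := tsum_mul_left
  have hK_main : K ≤ ε * (exp ε - 1) * M := by
    have hYleU : ∀ a, P a * X a ≤ ε * |P a - Q a| + (P a - Q a) := by
      intro a
      rcases (hP0 a).lt_or_eq with ha | ha
      · have hQpos : 0 < Q a := by
          rcases (hQ0 a).lt_or_eq with h | h
          · exact h
          · exact absurd (hQ_zero a h.symm) (by linarith)
        have h1 : Q a * X a ≤ P a - Q a := by
          have := Real.log_le_sub_one_of_pos (div_pos ha hQpos)
          calc Q a * X a ≤ Q a * (P a / Q a - 1) :=
              mul_le_mul_of_nonneg_left this (hQ0 a)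
            _ = P a - Q a := by field_simp
        have h2 : (P a - Q a) * X a ≤ ε * |P a - Q a| := by
          calc (P a - Q a) * X a ≤ |(P a - Q a) * X a| := le_abs_self _
            _ = |P a - Q a| * |X a| := abs_mul _ _
            _ ≤ |P a - Q a| * ε := by
                apply mul_le_mul_of_nonneg_left _ (abs_nonneg _)
                exact abs_le.2 (hXbound a ha)
            _ = ε * |P a - Q a| := by ring
        calc P a * X a = (P a - Q a) * X a + Q a * X a := by ring
          _ ≤ ε * |P a - Q a| + (P a - Q a) := add_le_add h2 h1
      · have hQa := hP_zero a ha.symm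
        simp [← ha, hQa]
    have hUs : Summable (fun a => |P a - Q a|) := (hPs.sub hQs).abs
    have hsum2 : K ≤ ε * (∑' a, |P a - Q a|) + (M - M) := by
      calc K ≤ ∑' a, (ε * |P a - Q a| + (P a - Q a)) :=
            Summable.tsum_le_tsum hYleU hYs ((hUs.mul_left ε).add (hPs.sub hQs))
        _ = ε * (∑' a, |P a - Q a|) + (M - M) := by
            rw [Summable.tsum_add (hUs.mul_left ε) (hPs.sub hQs), tsum_mul_left,
              Summable.tsum_sub hPs hQs, ← hmass]
    have hU_le : (∑' a, |P a - Q a|) ≤ (exp ε - 1) * M := by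
      have hmin : ∀ a, |P a - Q a| ≤ (exp ε - 1) * min (P a) (Q a) := by
        intro a
        rcases le_total (P a) (Q a) with h | h
        · rw [abs_of_nonpos (by linarith), min_eq_left h]
          have := hQP a
          linarith
        · rw [abs_of_nonneg (by linarith), min_eq_right h]
          have := hPQ a
          linarith
      have hmins : Summable (fun a => min (P a) (Q a)) :=
        Summable.of_nonneg_of_le (fun a => le_min (hP0 a) (hQ0 a))
          (fun a => min_le_left _ _) hPs
      calc (∑' a, |P a - Q a|) ≤ ∑' a, (exp ε - 1) * min (P a) (Q a) :=
            Summable.tsum_le_tsum hmin hUs (hmins.mul_left _)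
        _ = (exp ε - 1) * ∑' a, min (P a) (Q a) := tsum_mul_left
        _ ≤ (exp ε - 1) * M := by
            apply mul_le_mul_of_nonneg_left _ hee1
            exact Summable.tsum_le_tsum (fun a => min_le_left _ _) hmins hPs
    calc K ≤ ε * (∑' a, |P a - Q a|) + (M - M) := hsum2
      _ = ε * (∑' a, |P a - Q a|) := by ring
      _ ≤ ε * ((exp ε - 1) * M) := mul_le_mul_of_nonneg_left hU_le hε.le
      _ = ε * (exp ε - 1) * M := by ring
  -- final assembly
  rcases hM0.lt_or_eq with hMpos | hMzero
  · set m : ℝ := K / M with hm_def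
    have hm1 : -ε ≤ m := by
      rw [hm_def, le_div_iff₀ hMpos]
      have := (abs_le.1 hK_abs).1
      linarith
    have hm2 : m ≤ ε := by
      rw [hm_def, div_le_iff₀ hMpos]
      have := (abs_le.1 hK_abs).2
      linarith
    have hmμ : m ≤ ε * (exp ε - 1) := by
      rw [hm_def, div_le_iff₀ hMpos]
      linarith [hK_main]
    have hKm : K = m * M := by
      rw [hm_def]; field_simp
    have hchord := chord_bound hε hl hm1 hm2
    have hAB : A + B * m = ((ε - m) * exp (-(l * ε)) + (m + ε) * exp (l * ε)) / (2 * ε) := by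
      rw [hA_def, hB_def]
      field_simp
      ring
    have hABm : 0 ≤ A + B * m := by
      rw [hAB]
      apply div_nonneg _ (by linarith)
      have e1 : (0:ℝ) ≤ (ε - m) * exp (-(l * ε)) := mul_nonneg (by linarith) (exp_pos _).le
      have e2 : (0:ℝ) ≤ (m + ε) * exp (l * ε) := mul_nonneg (by linarith) (exp_pos _).le
      linarith
    calc ∑' a, T a ≤ A * M + B * K := hsum1
      _ = (A + B * m) * M := by rw [hKm]; ring
      _ ≤ exp (l * m + l ^ 2 * ε ^ 2 / 2) * M := by
          apply mul_le_mul_of_nonneg_right _ hM0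
          rw [hAB]
          exact hchord
      _ ≤ exp (l * (ε * (exp ε - 1)) + l ^ 2 * ε ^ 2 / 2) * 1 := by
          apply mul_le_mul _ hM1 hM0 (exp_pos _).le
          apply exp_le_exp.2
          have : l * m ≤ l * (ε * (exp ε - 1)) := mul_le_mul_of_nonneg_left hmμ hl
          linarith
      _ = exp (l * (ε * (exp ε - 1)) + l ^ 2 * ε ^ 2 / 2) := mul_one _
  · -- M = 0 : all P vanish
    have hPz : ∀ a, P a = 0 := by
      intro a
      have : P a ≤ M := Summable.le_tsum hPs a (fun b _ => hP0 b)
      exact le_antisymm (by rw [← hMzero] at this; exact this) (hP0 a)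
    have : ∀ a, T a = 0 := fun a => hT0 a (hPz a)
    rw [tsum_congr this, tsum_zero]
    positivity


/-- tsum of truncated subtraction. -/
lemma tsum_sub' {α : Type*} {f g : α → ℝ≥0∞} (hgf : ∀ a, g a ≤ f a)
    (hg : ∑' a, g a ≠ ∞) : ∑' a, (f a - g a) = ∑' a, f a - ∑' a, g a := by
  have h1 : ∑' a, (f a - g a) + ∑' a, g a = ∑' a, f a := by
    rw [← ENNReal.tsum_add]
    exact tsum_congr fun a => tsub_add_cancel_of_le (hgf a)
  exact ENNReal.eq_sub_of_add_eq hg h1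

lemma tsum_tsub_le {α : Type*} (f g : α → ℝ≥0∞) :
    ∑' a, f a - ∑' a, g a ≤ ∑' a, (f a - g a) := by
  rw [tsub_le_iff_right, ← ENNReal.tsum_add]
  exact ENNReal.tsum_le_tsum fun a => le_tsub_add

lemma exp_rpow' (x l : ℝ) : (exp x) ^ l = exp (x * l) := (Real.exp_mul x l).symm

lemma step_ennreal {ε l : ℝ} (hε : 0 < ε) (hl : 0 ≤ l) {Ω : Type*}
    (p q : Ω → ℝ≥0∞)
    (hpq : ∀ a, p a ≤ ENNReal.ofReal (exp ε) * q a)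
    (hqp : ∀ a, q a ≤ ENNReal.ofReal (exp ε) * p a)
    (hmass : ∑' a, p a = ∑' a, q a) (hle1 : ∑' a, p a ≤ 1) :
    ∑' a, p a * (p a / q a) ^ l
      ≤ ENNReal.ofReal (exp (l * (ε * (exp ε - 1)) + l ^ 2 * ε ^ 2 / 2)) := by
  have hptop : ∑' a, p a ≠ ∞ := (hle1.trans_lt ENNReal.one_lt_top).ne
  have hqtop : ∑' a, q a ≠ ∞ := by rw [← hmass]; exact hptop
  have hpfin : ∀ a, p a ≠ ∞ := fun a => ((ENNReal.le_tsum a).trans_lt hptop.lt_top).ne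
  have hqfin : ∀ a, q a ≠ ∞ := fun a => ((ENNReal.le_tsum a).trans_lt hqtop.lt_top).ne
  set P : Ω → ℝ := fun a => (p a).toReal with hP_def
  set Q : Ω → ℝ := fun a => (q a).toReal with hQ_def
  have hP0 : ∀ a, 0 ≤ P a := fun a => ENNReal.toReal_nonneg
  have hQ0 : ∀ a, 0 ≤ Q a := fun a => ENNReal.toReal_nonneg
  have hPs : Summable P := ENNReal.summable_toReal hptop
  have hQs : Summable Q := ENNReal.summable_toReal hqtop
  have hPQ : ∀ a, P a ≤ exp ε * Q a := by
    intro a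
    have := ENNReal.toReal_mono (by
      exact ENNReal.mul_ne_top ENNReal.ofReal_ne_top (hqfin a)) (hpq a)
    rwa [ENNReal.toReal_mul, ENNReal.toReal_ofReal (exp_pos ε).le] at this
  have hQP : ∀ a, Q a ≤ exp ε * P a := by
    intro a
    have := ENNReal.toReal_mono (by
      exact ENNReal.mul_ne_top ENNReal.ofReal_ne_top (hpfin a)) (hqp a)
    rwa [ENNReal.toReal_mul, ENNReal.toReal_ofReal (exp_pos ε).le] at this
  have htsumP : ∑' a, P a = (∑' a, p a).toReal := (ENNReal.tsum_toReal_eq hpfin).symm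
  have htsumQ : ∑' a, Q a = (∑' a, q a).toReal := (ENNReal.tsum_toReal_eq hqfin).symm
  have hmassR : ∑' a, P a = ∑' a, Q a := by rw [htsumP, htsumQ, hmass]
  have hM1 : ∑' a, P a ≤ 1 := by
    rw [htsumP]
    exact ENNReal.toReal_le_of_le_ofReal zero_le_one (by simpa using hle1)
  have key := step_real hε hl P Q hP0 hQ0 hPs hQs hPQ hQP hmassR hM1
  -- identify the ENNReal sum with ofReal of the real sum
  have hterm : ∀ a, p a * (p a / q a) ^ l = ENNReal.ofReal (P a * (P a / Q a) ^ l) := by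
    intro a
    by_cases hpa : p a = 0
    · have : P a = 0 := by simp [hP_def, hpa]
      simp [hpa, this]
    · have hqa : q a ≠ 0 := by
        intro h
        exact hpa (le_antisymm (by simpa [h] using hpq a) (zero_le))
      have hPpos : 0 < P a := ENNReal.toReal_pos hpa (hpfin a)
      have hQpos : 0 < Q a := ENNReal.toReal_pos hqa (hqfin a)
      have h1 : p a = ENNReal.ofReal (P a) := (ENNReal.ofReal_toReal (hpfin a)).symm
      have h2 : q a = ENNReal.ofReal (Q a) := (ENNReal.ofReal_toReal (hqfin a)).symm
      rw [h1, h2, ← ENNReal.ofReal_div_of_pos hQpos,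
        ENNReal.ofReal_rpow_of_pos (div_pos hPpos hQpos),
        ← ENNReal.ofReal_mul hPpos.le]
  have hT0 : ∀ a, 0 ≤ P a * (P a / Q a) ^ l := fun a =>
    mul_nonneg (hP0 a) (Real.rpow_nonneg (div_nonneg (hP0 a) (hQ0 a)) l)
  have hTs : Summable (fun a => P a * (P a / Q a) ^ l) := by
    refine Summable.of_nonneg_of_le hT0 (fun a => ?_) (hPs.mul_left (exp (ε * l)))
    by_cases hpa : P a = 0
    · simp [hpa]
    · have hPpos : 0 < P a := (hP0 a).lt_of_ne (Ne.symm hpa)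
      have hQpos : 0 < Q a := by
        rcases (hQ0 a).lt_or_eq with h | h
        · exact h
        · exfalso; apply hpa
          have := hPQ a
          rw [← h] at this
          nlinarith [hP0 a]
      have hrat : P a / Q a ≤ exp ε := by
        rw [div_le_iff₀ hQpos]; exact hPQ a
      calc P a * (P a / Q a) ^ l ≤ P a * (exp ε) ^ l := by
            apply mul_le_mul_of_nonneg_left _ (hP0 a)
            exact Real.rpow_le_rpow (div_nonneg (hP0 a) (hQ0 a)) hrat hl
        _ = exp (ε * l) * P a := by rw [exp_rpow']; ring
  calc ∑' a, p a * (p a / q a) ^ l = ∑' a, ENNReal.ofReal (P a * (P a / Q a) ^ l) :=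
        tsum_congr hterm
    _ = ENNReal.ofReal (∑' a, P a * (P a / Q a) ^ l) :=
        (ENNReal.ofReal_tsum_of_nonneg hT0 hTs).symm
    _ ≤ ENNReal.ofReal (exp (l * (ε * (exp ε - 1)) + l ^ 2 * ε ^ 2 / 2)) :=
        ENNReal.ofReal_le_ofReal key

lemma sub_add_sub_cancel'' {S T : ℝ≥0∞} (hS1 : S ≤ 1) (hTS : T ≤ S) :
    (1 - S) + (S - T) = 1 - T := by
  apply ENNReal.eq_sub_of_add_eq (((hTS.trans hS1).trans_lt ENNReal.one_lt_top).ne)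
  rw [add_assoc, tsub_add_cancel_of_le hTS, tsub_add_cancel_of_le hS1]

lemma sub_sub_comm' {a b c : ℝ≥0∞} (hab : a ≤ b) (hbc : b ≤ c) (hc : c ≠ ∞) :
    (c - a) - (c - b) = b - a := by
  have h1 : (b - a) + (c - b) = c - a := by
    apply ENNReal.eq_sub_of_add_eq ((hab.trans hbc).trans_lt hc.lt_top).ne
    rw [add_right_comm, tsub_add_cancel_of_le hab, add_comm b (c-b), tsub_add_cancel_of_le hbc]
  symm
  apply ENNReal.eq_sub_of_add_eq ((tsub_le_self.trans_lt hc.lt_top).ne)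
  exact h1

lemma modify {Ω : Type*} {E : ℝ≥0∞} (hE1 : 1 ≤ E) (hEtop : E ≠ ∞) {η : ℝ≥0∞}
    (p q : Ω → ℝ≥0∞) (hp1 : ∑' a, p a = 1) (hq1 : ∑' a, q a = 1)
    (hS : ∑' a, (p a - E * q a) ≤ η) (hT : ∑' a, (q a - E * p a) ≤ η) :
    ∃ p' q' : Ω → ℝ≥0∞,
      (∀ a, p' a ≤ E * q' a) ∧ (∀ a, q' a ≤ E * p' a) ∧
      (∑' a, p' a = ∑' a, q' a) ∧ (∑' a, p' a ≤ 1) ∧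
      (∑' a, (p a - p' a) ≤ η) ∧ (∀ a, q' a ≤ q a) := by
  have hE0 : E ≠ 0 := fun h => by simp [h] at hE1
  set pt : Ω → ℝ≥0∞ := fun a => min (p a) (E * q a) with hpt_def
  set qt : Ω → ℝ≥0∞ := fun a => min (q a) (E * p a) with hqt_def
  have hptp : ∀ a, pt a ≤ p a := fun a => min_le_left _ _
  have hqtq : ∀ a, qt a ≤ q a := fun a => min_le_left _ _
  have hpfin : ∀ a, p a ≠ ∞ := fun a =>
    (le_trans (ENNReal.le_tsum a) hp1.le).trans_lt ENNReal.one_lt_top |>.ne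
  have hptfin : ∀ a, pt a ≠ ∞ := fun a => ((hptp a).trans_lt (hpfin a).lt_top).ne
  have hsub_p : ∀ a, p a - pt a = p a - E * q a := by
    intro a
    show p a - min (p a) (E * q a) = p a - E * q a
    rcases le_total (p a) (E * q a) with h | h
    · rw [min_eq_left h, tsub_self, tsub_eq_zero_of_le h]
    · rw [min_eq_right h]
  have hsub_q : ∀ a, q a - qt a = q a - E * p a := by
    intro a
    show q a - min (q a) (E * p a) = q a - E * p a
    rcases le_total (q a) (E * p a) with h | h
    · rw [min_eq_left h, tsub_self, tsub_eq_zero_of_le h]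
    · rw [min_eq_right h]
  set S : ℝ≥0∞ := ∑' a, (p a - E * q a) with hS_def
  set T : ℝ≥0∞ := ∑' a, (q a - E * p a) with hT_def
  have hS1 : S ≤ 1 := by
    rw [hS_def, ← hp1]
    exact ENNReal.tsum_le_tsum fun a => tsub_le_self
  have hT1 : T ≤ 1 := by
    rw [hT_def, ← hq1]
    exact ENNReal.tsum_le_tsum fun a => tsub_le_self
  have hmass_pt : ∑' a, pt a = 1 - S := by
    apply ENNReal.eq_sub_of_add_eq (hS1.trans_lt ENNReal.one_lt_top).ne
    rw [hS_def, ← ENNReal.tsum_add, ← hp1]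
    apply tsum_congr
    intro a
    rw [← hsub_p a, add_comm, tsub_add_cancel_of_le (hptp a)]
  have hmass_qt : ∑' a, qt a = 1 - T := by
    apply ENNReal.eq_sub_of_add_eq (hT1.trans_lt ENNReal.one_lt_top).ne
    rw [hT_def, ← ENNReal.tsum_add, ← hq1]
    apply tsum_congr
    intro a
    rw [← hsub_q a, add_comm, tsub_add_cancel_of_le (hqtq a)]
  have hsum_p_pt : ∑' a, (p a - pt a) = S := tsum_congr hsub_p
  have hEE : (1:ℝ≥0∞) ≤ E * E := by
    calc (1:ℝ≥0∞) = 1 * 1 := (one_mul 1).symm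
      _ ≤ E * E := mul_le_mul' hE1 hE1
  have hptqt : ∀ a, pt a ≤ E * qt a := by
    intro a
    show pt a ≤ E * min (q a) (E * p a)
    rcases le_total (q a) (E * p a) with h | h
    · rw [min_eq_left h]
      exact min_le_right _ _
    · rw [min_eq_right h]
      calc pt a ≤ p a := hptp a
        _ = 1 * p a := (one_mul _).symm
        _ ≤ E * E * p a := mul_le_mul_left hEE _
        _ = E * (E * p a) := by ring
  have hqtpt : ∀ a, qt a ≤ E * pt a := by
    intro a
    show qt a ≤ E * min (p a) (E * q a)
    rcases le_total (p a) (E * q a) with h | h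
    · rw [min_eq_left h]
      exact min_le_right _ _
    · rw [min_eq_right h]
      calc qt a ≤ q a := hqtq a
        _ = 1 * q a := (one_mul _).symm
        _ ≤ E * E * q a := mul_le_mul_left hEE _
        _ = E * (E * q a) := by ring
  rcases le_total T S with hc | hc
  · -- inflate pt
    set D : ℝ≥0∞ := ∑' a, (E * qt a - pt a) with hD_def
    have hDfin : D ≠ ∞ := by
      have : D ≤ E * (1 - T) := by
        rw [hD_def, ← hmass_qt, ← ENNReal.tsum_mul_left]
        exact ENNReal.tsum_le_tsum fun a => tsub_le_self
      exact (this.trans_lt (ENNReal.mul_lt_top hEtop.lt_top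
        (tsub_le_self.trans_lt ENNReal.one_lt_top).ne.lt_top)).ne
    have hDge : S - T ≤ D := by
      calc S - T = (1 - T) - (1 - S) := (sub_sub_comm' hc hS1 ENNReal.one_ne_top).symm
        _ = ∑' a, qt a - ∑' a, pt a := by rw [hmass_pt, hmass_qt]
        _ ≤ ∑' a, (E * qt a) - ∑' a, pt a := by
            apply tsub_le_tsub_right
            exact ENNReal.tsum_le_tsum fun a => le_mul_of_one_le_left (zero_le) hE1
        _ ≤ D := tsum_tsub_le _ _
    set c : ℝ≥0∞ := (S - T) / D with hc_def
    have hc1 : c ≤ 1 := by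
      calc c ≤ D / D := ENNReal.div_le_div_right hDge D
        _ ≤ 1 := ENNReal.div_self_le_one
    have hcD : c * D = S - T := by
      by_cases hD0 : D = 0
      · have h0 : S - T = 0 := le_antisymm (hD0 ▸ hDge) (zero_le)
        rw [hc_def, h0, ENNReal.zero_div, zero_mul]
      · rw [hc_def]
        exact ENNReal.div_mul_cancel hD0 hDfin
    refine ⟨fun a => pt a + c * (E * qt a - pt a), qt, ?_, ?_, ?_, ?_, ?_, hqtq⟩
    · intro a
      calc pt a + c * (E * qt a - pt a) ≤ pt a + (E * qt a - pt a) :=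
            add_le_add_right (mul_le_of_le_one_left (zero_le) hc1) _
        _ = E * qt a := by rw [add_comm, tsub_add_cancel_of_le (hptqt a)]
    · intro a
      calc qt a ≤ E * pt a := hqtpt a
        _ ≤ E * (pt a + c * (E * qt a - pt a)) := mul_le_mul_right le_self_add _
    · rw [ENNReal.tsum_add, ENNReal.tsum_mul_left, ← hD_def, hcD, hmass_pt, hmass_qt]
      exact sub_add_sub_cancel'' hS1 hc
    · rw [ENNReal.tsum_add, ENNReal.tsum_mul_left, ← hD_def, hcD, hmass_pt,
        sub_add_sub_cancel'' hS1 hc]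
      exact tsub_le_self
    · calc ∑' a, (p a - (pt a + c * (E * qt a - pt a)))
          ≤ ∑' a, (p a - pt a) :=
            ENNReal.tsum_le_tsum fun a => tsub_le_tsub_left le_self_add _
        _ = S := hsum_p_pt
        _ ≤ η := hS
  · -- deflate pt
    set D : ℝ≥0∞ := ∑' a, (pt a - qt a / E) with hD_def
    have hqtEpt : ∀ a, qt a / E ≤ pt a := fun a =>
      ENNReal.div_le_of_le_mul (by rw [mul_comm]; exact hqtpt a)
    have hDfin : D ≠ ∞ := by
      have : D ≤ 1 - S := by
        rw [hD_def, ← hmass_pt]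
        exact ENNReal.tsum_le_tsum fun a => tsub_le_self
      exact (this.trans_lt (tsub_le_self.trans_lt ENNReal.one_lt_top)).ne
    have hDge : T - S ≤ D := by
      calc T - S = (1 - S) - (1 - T) := (sub_sub_comm' hc hT1 ENNReal.one_ne_top).symm
        _ = ∑' a, pt a - ∑' a, qt a := by rw [hmass_pt, hmass_qt]
        _ ≤ ∑' a, pt a - ∑' a, (qt a / E) := by
            apply tsub_le_tsub_left
            apply ENNReal.tsum_le_tsum
            intro a
            calc qt a / E ≤ qt a / 1 := ENNReal.div_le_div_left hE1 _
              _ = qt a := by rw [div_one]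
        _ ≤ D := tsum_tsub_le _ _
    set c : ℝ≥0∞ := (T - S) / D with hc_def
    have hc1 : c ≤ 1 := by
      calc c ≤ D / D := ENNReal.div_le_div_right hDge D
        _ ≤ 1 := ENNReal.div_self_le_one
    have hcD : c * D = T - S := by
      by_cases hD0 : D = 0
      · have h0 : T - S = 0 := le_antisymm (hD0 ▸ hDge) (zero_le)
        rw [hc_def, h0, ENNReal.zero_div, zero_mul]
      · rw [hc_def]
        exact ENNReal.div_mul_cancel hD0 hDfin
    have hsub_le_pt : ∀ a, c * (pt a - qt a / E) ≤ pt a := fun a =>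
      (mul_le_of_le_one_left (zero_le) hc1).trans tsub_le_self
    refine ⟨fun a => pt a - c * (pt a - qt a / E), qt, ?_, ?_, ?_, ?_, ?_, hqtq⟩
    · intro a
      calc pt a - c * (pt a - qt a / E) ≤ pt a := tsub_le_self
        _ ≤ E * qt a := hptqt a
    · intro a
      have h1 : qt a / E ≤ pt a - c * (pt a - qt a / E) := by
        calc qt a / E = pt a - (pt a - qt a / E) :=
              (ENNReal.sub_sub_cancel (hptfin a) (hqtEpt a)).symm
          _ ≤ pt a - c * (pt a - qt a / E) :=
              tsub_le_tsub_left (mul_le_of_le_one_left (zero_le) hc1) _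
      calc qt a = E * (qt a / E) := (ENNReal.mul_div_cancel' (fun h => absurd h hE0) (fun h => absurd h hEtop)).symm
        _ ≤ E * (pt a - c * (pt a - qt a / E)) := mul_le_mul_right h1 _
    · rw [tsum_sub' hsub_le_pt, ENNReal.tsum_mul_left, ← hD_def, hcD, hmass_pt, hmass_qt]
      · rw [tsub_tsub, add_tsub_cancel_of_le hc]
      · rw [ENNReal.tsum_mul_left, ← hD_def]
        exact ENNReal.mul_ne_top ((hc1.trans_lt ENNReal.one_lt_top).ne) hDfin
    · rw [tsum_sub' hsub_le_pt]
      · exact tsub_le_self.trans (hmass_pt ▸ tsub_le_self)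
      · rw [ENNReal.tsum_mul_left, ← hD_def]
        exact ENNReal.mul_ne_top ((hc1.trans_lt ENNReal.one_lt_top).ne) hDfin
    · calc ∑' a, (p a - (pt a - c * (pt a - qt a / E)))
          ≤ ∑' a, ((p a - pt a) + (pt a - (pt a - c * (pt a - qt a / E)))) :=
            ENNReal.tsum_le_tsum fun a => tsub_le_tsub_add_tsub
        _ = ∑' a, ((p a - pt a) + c * (pt a - qt a / E)) := by
            apply tsum_congr
            intro a
            rw [ENNReal.sub_sub_cancel (hptfin a) (hsub_le_pt a)]
        _ = S + c * D := by
            rw [ENNReal.tsum_add, hsum_p_pt, ENNReal.tsum_mul_left, hD_def]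
        _ = T := by rw [hcD, add_tsub_cancel_of_le hc]
        _ ≤ η := hT

/-! ### Auxiliary: Indist gives a bound on the truncated-subtraction mass -/

lemma indist_tsub {Y : Type*} (p q : PMF Y) {ε δ : ℝ}
    (h : ∀ S : Set Y, p.toOuterMeasure S ≤
      ENNReal.ofReal (Real.exp ε) * q.toOuterMeasure S + ENNReal.ofReal δ) :
    ∑' a, (p a - ENNReal.ofReal (Real.exp ε) * q a) ≤ ENNReal.ofReal δ := by
  set E := ENNReal.ofReal (Real.exp ε) with hE_def
  set B : Set Y := {a | E * q a < p a} with hB_def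
  have hqfin : ∑' a, B.indicator (fun a => E * q a) a ≠ ∞ := by
    apply ne_of_lt
    calc ∑' a, B.indicator (fun a => E * q a) a ≤ ∑' a, E * q a :=
          ENNReal.tsum_le_tsum fun a => Set.indicator_le_self _ _ a
      _ = E * ∑' a, q a := ENNReal.tsum_mul_left
      _ = E := by rw [q.tsum_coe, mul_one]
      _ < ∞ := ENNReal.ofReal_lt_top
  have heq : ∀ a, p a - E * q a = B.indicator (fun a => p a) a -
      B.indicator (fun a => E * q a) a := by
    intro a
    by_cases hB : a ∈ B
    · rw [Set.indicator_of_mem hB, Set.indicator_of_mem hB]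
    · rw [Set.indicator_of_notMem hB, Set.indicator_of_notMem hB,
        tsub_eq_zero_of_le (not_lt.1 hB)]
      simp
  have hmono : ∀ a, B.indicator (fun a => E * q a) a ≤ B.indicator (fun a => p a) a := by
    intro a
    by_cases hB : a ∈ B
    · rw [Set.indicator_of_mem hB, Set.indicator_of_mem hB]
      exact le_of_lt hB
    · simp [Set.indicator_of_notMem hB]
  have hindmul : ∑' a, B.indicator (fun a => E * q a) a = E * ∑' a, B.indicator (fun a => q a) a := by
    rw [← ENNReal.tsum_mul_left]
    apply tsum_congr
    intro a
    by_cases hB : a ∈ B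
    · rw [Set.indicator_of_mem hB, Set.indicator_of_mem hB]
    · rw [Set.indicator_of_notMem hB, Set.indicator_of_notMem hB, mul_zero]
  calc ∑' a, (p a - E * q a)
      = ∑' a, (B.indicator (fun a => p a) a - B.indicator (fun a => E * q a) a) :=
        tsum_congr heq
    _ = ∑' a, B.indicator (fun a => p a) a - ∑' a, B.indicator (fun a => E * q a) a :=
        tsum_sub' hmono hqfin
    _ ≤ ENNReal.ofReal δ := by
        rw [tsub_le_iff_right, hindmul]
        have hp := h B
        rw [p.toOuterMeasure_apply, q.toOuterMeasure_apply] at hp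
        calc ∑' a, B.indicator (fun a => p a) a
            ≤ E * (∑' a, B.indicator (fun a => q a) a) + ENNReal.ofReal δ := hp
          _ = ENNReal.ofReal δ + E * ∑' a, B.indicator (fun a => q a) a := by ring
/-! ### The one-sided advanced composition bound -/

lemma one_le_ofReal_exp {x : ℝ} (hx : 0 ≤ x) : (1:ℝ≥0∞) ≤ ENNReal.ofReal (Real.exp x) := by
  rw [← ENNReal.ofReal_one]
  apply ENNReal.ofReal_le_ofReal
  rw [← Real.exp_zero]
  exact Real.exp_le_exp.2 hx

lemma toOuter_eq_W {k : ℕ} (κ : (i : Fin k) → (Fin i → Ω) → PMF Ω) (S : Set (Fin k → Ω)) :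
    (view k κ).toOuterMeasure S = ∑' v, S.indicator (W (fun i w a => κ i w a)) v := by
  rw [PMF.toOuterMeasure_apply]
  apply tsum_congr
  intro v
  by_cases hv : v ∈ S
  · rw [Set.indicator_of_mem hv, Set.indicator_of_mem hv]
    exact view_apply κ v
  · rw [Set.indicator_of_notMem hv, Set.indicator_of_notMem hv]

lemma oneSided (k : ℕ) (hk : 0 < k)
    (κ0 κ1 : (i : Fin k) → (Fin i → Ω) → PMF Ω)
    (ε δ : ℝ) (hε : 0 ≤ ε) (hδ0 : 0 ≤ δ)
    (hind : ∀ (i : Fin k) (w : Fin i → Ω), Indist (κ0 i w) (κ1 i w) ε δ)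
    (δhat : ℝ) (hδhat : 0 < δhat) (hδhat1 : δhat < 1)
    (S : Set (Fin k → Ω)) :
    (view k κ0).toOuterMeasure S ≤
      ENNReal.ofReal (Real.exp (ε * (Real.exp ε - 1) * k +
        ε * Real.sqrt (2 * k * Real.log (1 / δhat)))) *
        (view k κ1).toOuterMeasure S + ENNReal.ofReal (k * δ + δhat) := by
  set εg : ℝ := ε * (Real.exp ε - 1) * k + ε * Real.sqrt (2 * k * Real.log (1 / δhat))
    with hεg_def
  have hee1 : (0:ℝ) ≤ Real.exp ε - 1 := by
    have : (1:ℝ) ≤ Real.exp ε := by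
      rw [← Real.exp_zero]; exact Real.exp_le_exp.2 hε
    linarith
  have hεg0 : 0 ≤ εg := by
    apply add_nonneg
    · apply mul_nonneg (mul_nonneg hε hee1) (Nat.cast_nonneg k)
    · exact mul_nonneg hε (Real.sqrt_nonneg _)
  set γ : ℝ≥0∞ := ENNReal.ofReal (Real.exp εg) with hγ_def
  have hγ1 : (1:ℝ≥0∞) ≤ γ := one_le_ofReal_exp hεg0
  set E : ℝ≥0∞ := ENNReal.ofReal (Real.exp ε) with hE_def
  have hE1 : (1:ℝ≥0∞) ≤ E := one_le_ofReal_exp hε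
  have hEtop : E ≠ ∞ := ENNReal.ofReal_ne_top
  -- per-round modification
  have hmod : ∀ (i : Fin k) (w : Fin i → Ω), ∃ p' q' : Ω → ℝ≥0∞,
      (∀ a, p' a ≤ E * q' a) ∧ (∀ a, q' a ≤ E * p' a) ∧
      (∑' a, p' a = ∑' a, q' a) ∧ (∑' a, p' a ≤ 1) ∧
      (∑' a, ((κ0 i w) a - p' a) ≤ ENNReal.ofReal δ) ∧ (∀ a, q' a ≤ (κ1 i w) a) := by
    intro i w
    apply modify hE1 hEtop (κ0 i w) (κ1 i w) (κ0 i w).tsum_coe (κ1 i w).tsum_coe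
    · exact indist_tsub (κ0 i w) (κ1 i w) (fun s => (hind i w s).1)
    · exact indist_tsub (κ1 i w) (κ0 i w) (fun s => (hind i w s).2)
  choose p' q' h1 h2 h3 h4 h5 h6 using hmod
  have hq'fin : ∀ (i : Fin k) (w : Fin i → Ω) (a : Ω), q' i w a ≠ ∞ := by
    intro i w a
    exact ((h6 i w a).trans ((κ1 i w).coe_le_one a)).trans_lt ENNReal.one_lt_top |>.ne
  -- Step A: closeness of the view to the modified weight
  have hstepA : (view k κ0).toOuterMeasure S ≤
      (∑' v, S.indicator (W (p' : (i : Fin k) → (Fin i → Ω) → Ω → ℝ≥0∞)) v)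
        + ENNReal.ofReal (k * δ) := by
    rw [toOuter_eq_W]
    have hclose : ∑' v, (W (fun i w a => (κ0 i w) a) v - W p' v) ≤ (k : ℝ≥0∞) * ENNReal.ofReal δ := by
      apply tsum_W_sub_le
      · exact fun i w => le_of_eq (κ0 i w).tsum_coe
      · exact fun i w => h4 i w
      · exact fun i w => h5 i w
    have hkδ : (k : ℝ≥0∞) * ENNReal.ofReal δ = ENNReal.ofReal (k * δ) := by
      rw [ENNReal.ofReal_mul (Nat.cast_nonneg k), ENNReal.ofReal_natCast]
    calc ∑' v, S.indicator (W (fun i w a => (κ0 i w) a)) v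
        ≤ ∑' v, (S.indicator (W p') v + (W (fun i w a => (κ0 i w) a) v - W p' v)) := by
          apply ENNReal.tsum_le_tsum
          intro v
          by_cases hv : v ∈ S
          · rw [Set.indicator_of_mem hv, Set.indicator_of_mem hv]
            exact le_add_tsub
          · rw [Set.indicator_of_notMem hv]
            exact zero_le
      _ = (∑' v, S.indicator (W p') v) + ∑' v, (W (fun i w a => (κ0 i w) a) v - W p' v) :=
          ENNReal.tsum_add
      _ ≤ (∑' v, S.indicator (W p') v) + ENNReal.ofReal (k * δ) := by
          rw [← hkδ]
          exact add_le_add_right hclose _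
  -- Step B: the modified weight is dominated by γ · V¹ + δhat
  have hstepB : (∑' v, S.indicator (W p') v) ≤
      γ * (view k κ1).toOuterMeasure S + ENNReal.ofReal δhat := by
    -- pointwise domination of W p' by R · W q'
    have hWq'le : ∀ v, W (q' : (i : Fin k) → (Fin i → Ω) → Ω → ℝ≥0∞) v ≤
        W (fun i w a => (κ1 i w) a) v := W_mono (fun i w a => h6 i w a)
    have hq'outer : (∑' v, S.indicator (W q') v) ≤ (view k κ1).toOuterMeasure S := by
      rw [toOuter_eq_W]
      apply ENNReal.tsum_le_tsum
      intro v
      by_cases hv : v ∈ S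
      · rw [Set.indicator_of_mem hv, Set.indicator_of_mem hv]
        exact hWq'le v
      · rw [Set.indicator_of_notMem hv]
        exact zero_le
    by_cases hεz : ε = 0
    -- ε = 0 : the two modified kernels coincide
    · have hEone : E = 1 := by rw [hE_def, hεz, Real.exp_zero, ENNReal.ofReal_one]
      have hp'q' : ∀ (i : Fin k) (w : Fin i → Ω) (a : Ω), p' i w a = q' i w a := by
        intro i w a
        have ha := h1 i w a
        have hb := h2 i w a
        rw [hEone, one_mul] at ha hb
        exact le_antisymm ha hb
      have hWeq : ∀ v, W (p' : (i : Fin k) → (Fin i → Ω) → Ω → ℝ≥0∞) v = W q' v := by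
        intro v
        apply Finset.prod_congr rfl
        intro i _
        rw [hp'q']
      calc (∑' v, S.indicator (W p') v) = ∑' v, S.indicator (W q') v := by
            apply tsum_congr
            intro v
            by_cases hv : v ∈ S
            · rw [Set.indicator_of_mem hv, Set.indicator_of_mem hv, hWeq]
            · rw [Set.indicator_of_notMem hv, Set.indicator_of_notMem hv]
        _ ≤ (view k κ1).toOuterMeasure S := hq'outer
        _ = 1 * (view k κ1).toOuterMeasure S := (one_mul _).symm
        _ ≤ γ * (view k κ1).toOuterMeasure S + ENNReal.ofReal δhat := by
            apply le_add_right
            exact mul_le_mul_left hγ1 _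
    -- ε > 0 : Markov / MGF argument
    · have hεpos : 0 < ε := lt_of_le_of_ne hε (Ne.symm hεz)
      set L : ℝ := Real.log (1 / δhat) with hL_def
      have hLpos : 0 < L := Real.log_pos (by rw [lt_div_iff₀ hδhat]; linarith)
      set t : ℝ := ε * Real.sqrt (2 * k * L) with ht_def
      have htpos : 0 < t := by
        apply mul_pos hεpos
        apply Real.sqrt_pos.2
        have hkpos : (0:ℝ) < k := Nat.cast_pos.2 hk
        positivity
      set l : ℝ := t / (k * ε ^ 2) with hl_def
      have hl0 : 0 ≤ l := by
        apply div_nonneg htpos.le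
        have hkpos : (0:ℝ) < k := Nat.cast_pos.2 hk
        positivity
      set z : ℝ := l * (ε * (Real.exp ε - 1)) + l ^ 2 * ε ^ 2 / 2 with hz_def
      set β : ℝ≥0∞ := ENNReal.ofReal (Real.exp z) with hβ_def
      set R : (Fin k → Ω) → ℝ≥0∞ := W (fun i w a => p' i w a / q' i w a) with hR_def
      set G : Set (Fin k → Ω) := {v | R v ≤ γ} with hG_def
      -- MGF bound
      have hstep : ∀ (i : Fin k) (w : Fin i → Ω),
          ∑' a, (p' i w a * (p' i w a / q' i w a) ^ l) ≤ β :=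
        fun i w => step_ennreal hεpos hl0 _ _ (h1 i w) (h2 i w) (h3 i w) (h4 i w)
      have hmgf : ∑' v, W (fun i w a => p' i w a * (p' i w a / q' i w a) ^ l) v ≤ β ^ k :=
        tsum_W_le _ β hstep
      have hWRl : ∀ v, W (p' : (i : Fin k) → (Fin i → Ω) → Ω → ℝ≥0∞) v * (R v) ^ l
          = W (fun i w a => p' i w a * (p' i w a / q' i w a) ^ l) v := by
        intro v
        rw [hR_def, W, W, W, ← ENNReal.prod_rpow_of_nonneg hl0, ← Finset.prod_mul_distrib]
      -- tail bound
      have hγl0 : γ ^ l ≠ 0 :=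
        (ENNReal.rpow_pos (ENNReal.ofReal_pos.2 (Real.exp_pos _)) ENNReal.ofReal_ne_top).ne'
      have hγlfin : γ ^ l ≠ ∞ := ENNReal.rpow_ne_top_of_nonneg hl0 ENNReal.ofReal_ne_top
      have htail : (∑' v, Gᶜ.indicator (W p') v) ≤ ENNReal.ofReal δhat := by
        have hmul : (∑' v, Gᶜ.indicator (W p') v) * γ ^ l ≤ β ^ k := by
          calc (∑' v, Gᶜ.indicator (W p') v) * γ ^ l
              = ∑' v, (Gᶜ.indicator (W p') v * γ ^ l) := ENNReal.tsum_mul_right.symm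
            _ ≤ ∑' v, W (fun i w a => p' i w a * (p' i w a / q' i w a) ^ l) v := by
                apply ENNReal.tsum_le_tsum
                intro v
                rw [← hWRl v]
                by_cases hv : v ∈ Gᶜ
                · rw [Set.indicator_of_mem hv]
                  apply mul_le_mul_right
                  exact ENNReal.rpow_le_rpow (le_of_lt (not_le.1 hv)) hl0
                · rw [Set.indicator_of_notMem hv]
                  simp
            _ ≤ β ^ k := hmgf
        have hdiv : (∑' v, Gᶜ.indicator (W p') v) ≤ β ^ k / γ ^ l :=
          (ENNReal.le_div_iff_mul_le (Or.inl hγl0) (Or.inl hγlfin)).2 hmul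
        refine hdiv.trans ?_
        have hβk : β ^ k = ENNReal.ofReal (Real.exp (k * z)) := by
          rw [hβ_def, ← ENNReal.ofReal_pow (Real.exp_pos z).le, ← Real.exp_nat_mul]
        have hγl : γ ^ l = ENNReal.ofReal (Real.exp (εg * l)) := by
          rw [hγ_def, ENNReal.ofReal_rpow_of_pos (Real.exp_pos εg), exp_rpow']
        rw [hβk, hγl, ← ENNReal.ofReal_div_of_pos (Real.exp_pos _), ← Real.exp_sub]
        apply ENNReal.ofReal_le_ofReal
        have hexp_eq : k * z - εg * l = -L := by
          have hkR : (0:ℝ) < (k:ℝ) := Nat.cast_pos.2 hk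
          have hk0 : (k:ℝ) ≠ 0 := hkR.ne'
          have hε0 : ε ≠ 0 := hεpos.ne'
          have ht2 : t ^ 2 = ε ^ 2 * (2 * k * L) := by
            rw [ht_def, mul_pow, Real.sq_sqrt (by positivity)]
          have hεgt : εg = ε * (Real.exp ε - 1) * k + t := by rw [hεg_def, ht_def, hL_def]
          have ha : k * z - εg * l = k * l ^ 2 * ε ^ 2 / 2 - t * l := by
            rw [hz_def, hεgt]; ring
          have hb : k * l ^ 2 * ε ^ 2 / 2 - t * l = -(t ^ 2 / (2 * k * ε ^ 2)) := by
            rw [hl_def]; field_simp; ring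
          have hc : -(t ^ 2 / (2 * k * ε ^ 2)) = -L := by
            rw [ht2]; field_simp
          rw [ha, hb, hc]
        rw [hexp_eq, hL_def, one_div, Real.log_inv, neg_neg, Real.exp_log hδhat]
      -- good-event bound
      have hWle : ∀ v, W (p' : (i : Fin k) → (Fin i → Ω) → Ω → ℝ≥0∞) v ≤ R v * W q' v := by
        intro v
        rw [hR_def, W, W, W, ← Finset.prod_mul_distrib]
        apply Finset.prod_le_prod'
        intro i _
        by_cases hq : q' i (pre v i) (v i) = 0
        · have hp0 : p' i (pre v i) (v i) = 0 := by
            have := h1 i (pre v i) (v i)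
            rw [hq, mul_zero] at this
            exact le_antisymm this (zero_le)
          rw [hp0]
          exact zero_le
        · rw [ENNReal.div_mul_cancel hq (hq'fin i (pre v i) (v i))]
      have hgood : (∑' v, (S ∩ G).indicator (W p') v) ≤ γ * (view k κ1).toOuterMeasure S := by
        calc (∑' v, (S ∩ G).indicator (W p') v) ≤ ∑' v, (γ * S.indicator (W q') v) := by
              apply ENNReal.tsum_le_tsum
              intro v
              by_cases hv : v ∈ S ∩ G
              · rw [Set.indicator_of_mem hv, Set.indicator_of_mem hv.1]
                calc W p' v ≤ R v * W q' v := hWle v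
                  _ ≤ γ * W q' v := mul_le_mul_left hv.2 _
              · rw [Set.indicator_of_notMem hv]
                exact zero_le
          _ = γ * ∑' v, S.indicator (W q') v := ENNReal.tsum_mul_left
          _ ≤ γ * (view k κ1).toOuterMeasure S := mul_le_mul_right hq'outer _
      -- combine good and bad
      calc (∑' v, S.indicator (W p') v)
          ≤ ∑' v, ((S ∩ G).indicator (W p') v + Gᶜ.indicator (W p') v) := by
            apply ENNReal.tsum_le_tsum
            intro v
            by_cases hv : v ∈ S
            · by_cases hg : v ∈ G
              · rw [Set.indicator_of_mem hv, Set.indicator_of_mem (Set.mem_inter hv hg)]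
                exact le_add_right le_rfl
              · rw [Set.indicator_of_mem hv, Set.indicator_of_mem (by exact hg : v ∈ Gᶜ)]
                apply le_add_left le_rfl
            · rw [Set.indicator_of_notMem hv]
              exact zero_le
        _ = (∑' v, (S ∩ G).indicator (W p') v) + ∑' v, Gᶜ.indicator (W p') v :=
            ENNReal.tsum_add
        _ ≤ γ * (view k κ1).toOuterMeasure S + ENNReal.ofReal δhat :=
            add_le_add hgood htail
  -- combine Steps A and B
  calc (view k κ0).toOuterMeasure S
      ≤ (∑' v, S.indicator (W p') v) + ENNReal.ofReal (k * δ) := hstepA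
    _ ≤ (γ * (view k κ1).toOuterMeasure S + ENNReal.ofReal δhat) + ENNReal.ofReal (k * δ) :=
        add_le_add_left hstepB _
    _ = γ * (view k κ1).toOuterMeasure S + ENNReal.ofReal (k * δ + δhat) := by
        rw [ENNReal.ofReal_add (by positivity) hδhat.le, add_assoc, add_comm (ENNReal.ofReal δhat)]
/-- Advanced composition (Dwork–Rothblum–Vadhan): if every round is `(ε,δ)`-DP with
the same fixed `ε ≥ 0` and `δ ∈ [0,1)`, then for every `δ̂ > 0` the views `V^0` and
`V^1` are `(ε(e^ε−1)k + ε√(2k log(1/δ̂)), kδ + δ̂)`-indistinguishable. -/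
theorem advanced_composition [Countable Ω] (k : ℕ)
    (κ0 κ1 : (i : Fin k) → (Fin i → Ω) → PMF Ω)
    (ε δ : ℝ) (hε : 0 ≤ ε) (hδ0 : 0 ≤ δ) (hδ1 : δ < 1)
    (hind : ∀ (i : Fin k) (w : Fin i → Ω), Indist (κ0 i w) (κ1 i w) ε δ)
    (δhat : ℝ) (hδhat : 0 < δhat) :
    Indist (view k κ0) (view k κ1)
      (ε * (Real.exp ε - 1) * k + ε * Real.sqrt (2 * k * Real.log (1 / δhat)))
      (k * δ + δhat) := by
  intro S
  set εg : ℝ := ε * (Real.exp ε - 1) * k + ε * Real.sqrt (2 * k * Real.log (1 / δhat))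
    with hεg_def
  have hee1 : (0:ℝ) ≤ Real.exp ε - 1 := by
    have : (1:ℝ) ≤ Real.exp ε := by
      rw [← Real.exp_zero]; exact Real.exp_le_exp.2 hε
    linarith
  have hεg0 : 0 ≤ εg := by
    apply add_nonneg
    · exact mul_nonneg (mul_nonneg hε hee1) (Nat.cast_nonneg k)
    · exact mul_nonneg hε (Real.sqrt_nonneg _)
  have hγ1 : (1:ℝ≥0∞) ≤ ENNReal.ofReal (Real.exp εg) := one_le_ofReal_exp hεg0
  have houter_le_one : ∀ (u : PMF (Fin k → Ω)), u.toOuterMeasure S ≤ 1 := by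
    intro u
    rw [PMF.toOuterMeasure_apply, ← u.tsum_coe]
    exact ENNReal.tsum_le_tsum fun v => Set.indicator_le_self _ _ v
  by_cases htriv : 1 ≤ k * δ + δhat
  · -- trivial: additive slack at least 1
    have hbig : (1:ℝ≥0∞) ≤ ENNReal.ofReal (k * δ + δhat) := by
      rw [← ENNReal.ofReal_one]
      exact ENNReal.ofReal_le_ofReal htriv
    constructor
    · calc (view k κ0).toOuterMeasure S ≤ 1 := houter_le_one _
        _ ≤ ENNReal.ofReal (k * δ + δhat) := hbig
        _ ≤ _ := le_add_self
    · calc (view k κ1).toOuterMeasure S ≤ 1 := houter_le_one _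
        _ ≤ ENNReal.ofReal (k * δ + δhat) := hbig
        _ ≤ _ := le_add_self
  · push_neg at htriv
    have hδhat1 : δhat < 1 := by
      have : (0:ℝ) ≤ k * δ := by positivity
      linarith
    rcases Nat.eq_zero_or_pos k with hk | hk
    · -- k = 0 : the two views are equal
      subst hk
      have hveq : view 0 κ0 = view 0 κ1 := rfl
      constructor
      · rw [hveq]
        calc (view 0 κ1).toOuterMeasure S
            = 1 * (view 0 κ1).toOuterMeasure S := (one_mul _).symm
          _ ≤ ENNReal.ofReal (Real.exp εg) * (view 0 κ1).toOuterMeasure S :=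
              mul_le_mul_left hγ1 _
          _ ≤ _ := le_add_right le_rfl
      · rw [hveq]
        calc (view 0 κ1).toOuterMeasure S
            = 1 * (view 0 κ1).toOuterMeasure S := (one_mul _).symm
          _ ≤ ENNReal.ofReal (Real.exp εg) * (view 0 κ1).toOuterMeasure S :=
              mul_le_mul_left hγ1 _
          _ ≤ _ := le_add_right le_rfl
    · constructor
      · exact oneSided k hk κ0 κ1 ε δ hε hδ0 hind δhat hδhat hδhat1 S
      · exact oneSided k hk κ1 κ0 ε δ hε hδ0
          (fun i w s => ⟨(hind i w s).2, (hind i w s).1⟩) δhat hδhat hδhat1 S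

end AdaptiveComp
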